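/- Soundness of the AML proof system for global semantic consequence: if Γ ⊢ φ in the Hilbert system 𝓗 (axioms: propositional tautologies, ∃-quantifier axiom φ[y/x] → ∃x.φ when x free for y, Propagation_⊥/∨/∃, Pre-Fixpoint, Existence ∃x.x, Singleton Variable; rules: modus ponens, ∃-quantifier rule, framing, set variable substitution, Knaster–Tarski), then Γ ⊨ φ globally, i.e., every structure satisfying all of Γ (under all valuations) satisfies φ under all valuations. -/

import Mathlib

inductive Pattern (σ : Type) : Type where
  | evar : ℕ → Pattern σ
  | svar : ℕ → Pattern σ
  | const : σ → Pattern σ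
  | app : Pattern σ → Pattern σ → Pattern σ
  | imp : Pattern σ → Pattern σ → Pattern σ
  | ex : ℕ → Pattern σ → Pattern σ
  | mu : ℕ → Pattern σ → Pattern σ

structure AMLStructure (σ : Type) (A : Type) : Type where
  app : A → A → Set A
  interp : σ → Set A

def AMLStructure.sapp {σ A : Type} (S : AMLStructure σ A) (B C : Set A) : Set A :=
  ⋃ b ∈ B, ⋃ c ∈ C, S.app b c

structure Val (A : Type) : Type where
  e : ℕ → A
  s : ℕ → Set A

def Val.updE {A : Type} (v : Val A) (x : ℕ) (a : A) : Val A :=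
  ⟨fun y => if y = x then a else v.e y, v.s⟩

def Val.updS {A : Type} (v : Val A) (X : ℕ) (B : Set A) : Val A :=
  ⟨v.e, fun Y => if Y = X then B else v.s Y⟩

def eval {σ A : Type} (S : AMLStructure σ A) : Pattern σ → Val A → Set A
  | .evar n, v => {v.e n}
  | .svar n, v => v.s n
  | .const c, _ => S.interp c
  | .app φ ψ, v => S.sapp (eval S φ v) (eval S ψ v)
  | .imp φ ψ, v => (eval S φ v \ eval S ψ v)ᶜ
  | .ex x φ, v => ⋃ a : A, eval S φ (v.updE x a)
  | .mu X φ, v => ⋂₀ {B | eval S φ (v.updS X B) ⊆ B}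

def fv {σ : Type} : Pattern σ → Set (ℕ ⊕ ℕ)
  | .evar n => {Sum.inl n}
  | .svar n => {Sum.inr n}
  | .const _ => ∅
  | .app φ ψ => fv φ ∪ fv ψ
  | .imp φ ψ => fv φ ∪ fv ψ
  | .ex x φ => fv φ \ {Sum.inl x}
  | .mu X φ => fv φ \ {Sum.inr X}

def botP {σ : Type} : Pattern σ := .mu 0 (.svar 0)
def negP {σ : Type} (φ : Pattern σ) : Pattern σ := .imp φ botP
def topP {σ : Type} : Pattern σ := negP botP
def orP {σ : Type} (φ ψ : Pattern σ) : Pattern σ := .imp (negP φ) ψ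
def andP {σ : Type} (φ ψ : Pattern σ) : Pattern σ := negP (orP (negP φ) (negP ψ))
def iffP {σ : Type} (φ ψ : Pattern σ) : Pattern σ := andP (.imp φ ψ) (.imp ψ φ)
def allP {σ : Type} (x : ℕ) (φ : Pattern σ) : Pattern σ := negP (.ex x (negP φ))

def substS {σ : Type} (δ : Pattern σ) (X : ℕ) : Pattern σ → Pattern σ
  | .evar n => .evar n
  | .svar Y => if Y = X then δ else .svar Y
  | .const c => .const c
  | .app φ ψ => .app (substS δ X φ) (substS δ X ψ)
  | .imp φ ψ => .imp (substS δ X φ) (substS δ X ψ)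
  | .ex x φ => .ex x (substS δ X φ)
  | .mu Z φ => if Z = X then .mu Z φ else .mu Z (substS δ X φ)

def substE {σ : Type} (δ : Pattern σ) (x : ℕ) : Pattern σ → Pattern σ
  | .evar n => if n = x then δ else .evar n
  | .svar Y => .svar Y
  | .const c => .const c
  | .app φ ψ => .app (substE δ x φ) (substE δ x ψ)
  | .imp φ ψ => .imp (substE δ x φ) (substE δ x ψ)
  | .ex z φ => if z = x then .ex z φ else .ex z (substE δ x φ)
  | .mu Z φ => .mu Z (substE δ x φ)

def freeForS {σ : Type} (δ : Pattern σ) (X : ℕ) : Pattern σ → Prop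
  | .evar _ => True
  | .svar _ => True
  | .const _ => True
  | .app φ ψ => freeForS δ X φ ∧ freeForS δ X ψ
  | .imp φ ψ => freeForS δ X φ ∧ freeForS δ X ψ
  | .ex z φ => (Sum.inr X ∈ fv φ → Sum.inl z ∉ fv δ) ∧ freeForS δ X φ
  | .mu Z φ => Z = X ∨ ((Sum.inr X ∈ fv φ → Sum.inr Z ∉ fv δ) ∧ freeForS δ X φ)

def freeForE {σ : Type} (δ : Pattern σ) (x : ℕ) : Pattern σ → Prop
  | .evar _ => True
  | .svar _ => True
  | .const _ => True
  | .app φ ψ => freeForE δ x φ ∧ freeForE δ x ψ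
  | .imp φ ψ => freeForE δ x φ ∧ freeForE δ x ψ
  | .ex z φ => z = x ∨ ((Sum.inl x ∈ fv φ → Sum.inl z ∉ fv δ) ∧ freeForE δ x φ)
  | .mu Z φ => (Sum.inl x ∈ fv φ → Sum.inr Z ∉ fv δ) ∧ freeForE δ x φ

def subb {σ : Type} (x y : ℕ) : Pattern σ → Pattern σ
  | .evar n => .evar n
  | .svar Y => .svar Y
  | .const c => .const c
  | .app φ ψ => .app (subb x y φ) (subb x y ψ)
  | .imp φ ψ => .imp (subb x y φ) (subb x y ψ)
  | .ex z φ => if z = x then .ex y (substE (.evar y) x (subb x y φ)) else .ex z (subb x y φ)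
  | .mu Z φ => .mu Z (subb x y φ)

def occursE {σ : Type} (y : ℕ) : Pattern σ → Prop
  | .evar n => n = y
  | .svar _ => False
  | .const _ => False
  | .app φ ψ => occursE y φ ∨ occursE y ψ
  | .imp φ ψ => occursE y φ ∨ occursE y ψ
  | .ex z φ => z = y ∨ occursE y φ
  | .mu _ φ => occursE y φ

mutual
def positiveIn {σ : Type} (X : ℕ) : Pattern σ → Prop
  | .evar _ => True
  | .svar _ => True
  | .const _ => True
  | .app φ ψ => positiveIn X φ ∧ positiveIn X ψ
  | .imp φ ψ => negativeIn X φ ∧ positiveIn X ψ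
  | .ex _ φ => positiveIn X φ
  | .mu Z φ => Z = X ∨ positiveIn X φ

def negativeIn {σ : Type} (X : ℕ) : Pattern σ → Prop
  | .evar _ => True
  | .svar Y => Y ≠ X
  | .const _ => True
  | .app φ ψ => negativeIn X φ ∧ negativeIn X ψ
  | .imp φ ψ => positiveIn X φ ∧ negativeIn X ψ
  | .ex _ φ => negativeIn X φ
  | .mu Z φ => Z = X ∨ negativeIn X φ
end

def nuP {σ : Type} (X : ℕ) (φ : Pattern σ) : Pattern σ :=
  negP (.mu X (negP (substS (negP (.svar X)) X φ)))

inductive Ctx (σ : Type) : Type where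
  | hole : Ctx σ
  | appL : Ctx σ → Pattern σ → Ctx σ
  | appR : Pattern σ → Ctx σ → Ctx σ

def Ctx.plug {σ : Type} : Ctx σ → Pattern σ → Pattern σ
  | .hole, δ => δ
  | .appL C ψ, δ => .app (C.plug δ) ψ
  | .appR ψ C, δ => .app ψ (C.plug δ)

def IsPropEval {σ A : Type} (F : Pattern σ → Set A) : Prop :=
  F botP = ∅ ∧ ∀ φ ψ : Pattern σ, F (Pattern.imp φ ψ) = (F φ \ F ψ)ᶜ

def Tautology {σ : Type} (φ : Pattern σ) : Prop :=
  ∀ (A : Type), Nonempty A → ∀ F : Pattern σ → Set A, IsPropEval F → F φ = Set.univ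

inductive Proof {σ : Type} (Γ : Set (Pattern σ)) : Pattern σ → Prop where
  | hyp {φ : Pattern σ} : φ ∈ Γ → Proof Γ φ
  | taut {φ : Pattern σ} : Tautology φ → Proof Γ φ
  | exQuant {φ : Pattern σ} {x y : ℕ} :
      freeForE (Pattern.evar y) x φ →
      Proof Γ (.imp (substE (Pattern.evar y) x φ) (.ex x φ))
  | propBotL {φ : Pattern σ} : Proof Γ (.imp (.app φ botP) botP)
  | propBotR {φ : Pattern σ} : Proof Γ (.imp (.app botP φ) botP)
  | propOrL {φ ψ χ : Pattern σ} :
      Proof Γ (.imp (.app (orP φ ψ) χ) (orP (.app φ χ) (.app ψ χ)))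
  | propOrR {φ ψ χ : Pattern σ} :
      Proof Γ (.imp (.app χ (orP φ ψ)) (orP (.app χ φ) (.app χ ψ)))
  | propExL {φ ψ : Pattern σ} {x : ℕ} : Sum.inl x ∉ fv ψ →
      Proof Γ (.imp (.app (.ex x φ) ψ) (.ex x (.app φ ψ)))
  | propExR {φ ψ : Pattern σ} {x : ℕ} : Sum.inl x ∉ fv ψ →
      Proof Γ (.imp (.app ψ (.ex x φ)) (.ex x (.app ψ φ)))
  | preFixpoint {φ : Pattern σ} {X : ℕ} : positiveIn X φ → freeForS (.mu X φ) X φ →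
      Proof Γ (.imp (substS (.mu X φ) X φ) (.mu X φ))
  | existence {x : ℕ} : Proof Γ (.ex x (.evar x))
  | singleton {C₁ C₂ : Ctx σ} {φ : Pattern σ} {x : ℕ} :
      Proof Γ (negP (andP (C₁.plug (andP (.evar x) φ)) (C₂.plug (andP (.evar x) (negP φ)))))
  | mp {φ ψ : Pattern σ} : Proof Γ φ → Proof Γ (.imp φ ψ) → Proof Γ ψ
  | exRule {φ ψ : Pattern σ} {x : ℕ} : Sum.inl x ∉ fv ψ →
      Proof Γ (.imp φ ψ) → Proof Γ (.imp (.ex x φ) ψ)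
  | framingL {φ ψ χ : Pattern σ} :
      Proof Γ (.imp φ ψ) → Proof Γ (.imp (.app φ χ) (.app ψ χ))
  | framingR {φ ψ χ : Pattern σ} :
      Proof Γ (.imp φ ψ) → Proof Γ (.imp (.app χ φ) (.app χ ψ))
  | svSubst {φ ψ : Pattern σ} {X : ℕ} : freeForS ψ X φ →
      Proof Γ φ → Proof Γ (substS ψ X φ)
  | knasterTarski {φ ψ : Pattern σ} {X : ℕ} : freeForS ψ X φ →
      Proof Γ (.imp (substS ψ X φ) ψ) → Proof Γ (.imp (.mu X φ) ψ)

section Lemmas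
open Classical
variable {σ A : Type} (S : AMLStructure σ A)

@[simp] lemma updE_e (v : Val A) (x : ℕ) (a : A) (n : ℕ) :
    (v.updE x a).e n = if n = x then a else v.e n := rfl
@[simp] lemma updE_s (v : Val A) (x : ℕ) (a : A) : (v.updE x a).s = v.s := rfl
@[simp] lemma updS_s (v : Val A) (X : ℕ) (B : Set A) (N : ℕ) :
    (v.updS X B).s N = if N = X then B else v.s N := rfl
@[simp] lemma updS_e (v : Val A) (X : ℕ) (B : Set A) : (v.updS X B).e = v.e := rfl

lemma updS_updS_same (v : Val A) (X : ℕ) (B C : Set A) :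
    (v.updS X B).updS X C = v.updS X C := by
  unfold Val.updS; simp only [Val.mk.injEq]
  exact ⟨trivial, funext fun Y => by by_cases h : Y = X <;> simp [h]⟩

lemma updS_updS_comm (v : Val A) {X Z : ℕ} (h : Z ≠ X) (B C : Set A) :
    (v.updS Z B).updS X C = (v.updS X C).updS Z B := by
  unfold Val.updS; simp only [Val.mk.injEq]
  refine ⟨trivial, funext fun Y => ?_⟩
  by_cases h1 : Y = X <;> by_cases h2 : Y = Z <;> simp [h1, h2] <;> simp_all

lemma updE_updE_same (v : Val A) (x : ℕ) (a b : A) :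
    (v.updE x a).updE x b = v.updE x b := by
  unfold Val.updE; simp only [Val.mk.injEq]
  exact ⟨funext fun y => by by_cases h : y = x <;> simp [h], trivial⟩

lemma updE_updE_comm (v : Val A) {x z : ℕ} (h : z ≠ x) (a b : A) :
    (v.updE z a).updE x b = (v.updE x b).updE z a := by
  unfold Val.updE; simp only [Val.mk.injEq]
  refine ⟨funext fun y => ?_, trivial⟩
  by_cases h1 : y = x <;> by_cases h2 : y = z <;> simp [h1, h2] <;> simp_all

lemma updE_updS (v : Val A) (x : ℕ) (a : A) (X : ℕ) (B : Set A) :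
    (v.updE x a).updS X B = (v.updS X B).updE x a := rfl

lemma sapp_mono {B B' C C' : Set A} (h1 : B ⊆ B') (h2 : C ⊆ C') :
    S.sapp B C ⊆ S.sapp B' C' := by
  intro a ha
  simp only [AMLStructure.sapp, Set.mem_iUnion] at ha ⊢
  obtain ⟨b, hb, c, hc, h⟩ := ha
  exact ⟨b, h1 hb, c, h2 hc, h⟩

@[simp] lemma sapp_empty_left (C : Set A) : S.sapp ∅ C = ∅ := by
  simp [AMLStructure.sapp]

@[simp] lemma sapp_empty_right (B : Set A) : S.sapp B ∅ = ∅ := by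
  simp [AMLStructure.sapp]

lemma sapp_union_left (B B' C : Set A) :
    S.sapp (B ∪ B') C = S.sapp B C ∪ S.sapp B' C := by
  ext a; simp only [AMLStructure.sapp, Set.mem_union, Set.mem_iUnion]
  constructor
  · rintro ⟨b, hb | hb, c, hc, h⟩
    · exact Or.inl ⟨b, hb, c, hc, h⟩
    · exact Or.inr ⟨b, hb, c, hc, h⟩
  · rintro (⟨b, hb, c, hc, h⟩ | ⟨b, hb, c, hc, h⟩)
    · exact ⟨b, Or.inl hb, c, hc, h⟩
    · exact ⟨b, Or.inr hb, c, hc, h⟩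

lemma sapp_union_right (B C C' : Set A) :
    S.sapp B (C ∪ C') = S.sapp B C ∪ S.sapp B C' := by
  ext a; simp only [AMLStructure.sapp, Set.mem_union, Set.mem_iUnion]
  constructor
  · rintro ⟨b, hb, c, hc | hc, h⟩
    · exact Or.inl ⟨b, hb, c, hc, h⟩
    · exact Or.inr ⟨b, hb, c, hc, h⟩
  · rintro (⟨b, hb, c, hc, h⟩ | ⟨b, hb, c, hc, h⟩)
    · exact ⟨b, hb, c, Or.inl hc, h⟩
    · exact ⟨b, hb, c, Or.inr hc, h⟩

lemma sapp_iUnion_left {ι : Sort*} (B : ι → Set A) (C : Set A) :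
    S.sapp (⋃ i, B i) C = ⋃ i, S.sapp (B i) C := by
  ext a; simp only [AMLStructure.sapp, Set.mem_iUnion]
  constructor
  · rintro ⟨b, ⟨i, hb⟩, c, hc, h⟩; exact ⟨i, b, hb, c, hc, h⟩
  · rintro ⟨i, b, hb, c, hc, h⟩; exact ⟨b, ⟨i, hb⟩, c, hc, h⟩

lemma sapp_iUnion_right {ι : Sort*} (B : Set A) (C : ι → Set A) :
    S.sapp B (⋃ i, C i) = ⋃ i, S.sapp B (C i) := by
  ext a; simp only [AMLStructure.sapp, Set.mem_iUnion]
  constructor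
  · rintro ⟨b, hb, c, ⟨i, hc⟩, h⟩; exact ⟨i, b, hb, c, hc, h⟩
  · rintro ⟨i, b, hb, c, hc, h⟩; exact ⟨b, hb, c, ⟨i, hc⟩, h⟩

end Lemmas
section Coincide
open Classical
variable {σ A : Type} (S : AMLStructure σ A)

lemma eval_coincide (φ : Pattern σ) : ∀ v w : Val A,
    (∀ n, Sum.inl n ∈ fv φ → v.e n = w.e n) →
    (∀ N, Sum.inr N ∈ fv φ → v.s N = w.s N) →
    eval S φ v = eval S φ w := by
  induction φ with
  | evar n => intro v w he _; simp [eval, he n (by simp [fv])]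
  | svar N => intro v w _ hs; simp [eval, hs N (by simp [fv])]
  | const c => intro v w _ _; rfl
  | app φ ψ ihφ ihψ =>
      intro v w he hs
      simp only [eval]
      rw [ihφ v w (fun n hn => he n (Or.inl hn)) (fun N hN => hs N (Or.inl hN)),
          ihψ v w (fun n hn => he n (Or.inr hn)) (fun N hN => hs N (Or.inr hN))]
  | imp φ ψ ihφ ihψ =>
      intro v w he hs
      simp only [eval]
      rw [ihφ v w (fun n hn => he n (Or.inl hn)) (fun N hN => hs N (Or.inl hN)),
          ihψ v w (fun n hn => he n (Or.inr hn)) (fun N hN => hs N (Or.inr hN))]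
  | ex x φ ih =>
      intro v w he hs
      simp only [eval]
      refine Set.iUnion_congr fun a => ih _ _ (fun n hn => ?_) (fun N hN => hs N ⟨hN, by simp⟩)
      by_cases hnx : n = x
      · simp [hnx]
      · simpa [hnx] using he n ⟨hn, by simp [hnx]⟩
  | mu X φ ih =>
      intro v w he hs
      simp only [eval]
      have key : ∀ B : Set A, eval S φ (v.updS X B) = eval S φ (w.updS X B) := by
        intro B
        refine ih _ _ (fun n hn => he n ⟨hn, by simp⟩) (fun N hN => ?_)
        by_cases hNX : N = X
        · simp [hNX]
        · simpa [hNX] using hs N ⟨hN, by simp [hNX]⟩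
      have : {B : Set A | eval S φ (v.updS X B) ⊆ B} = {B : Set A | eval S φ (w.updS X B) ⊆ B} :=
        Set.ext fun B => by simp only [Set.mem_setOf_eq, key B]
      rw [this]

lemma substS_fvless {X : ℕ} (ψ : Pattern σ) : ∀ φ : Pattern σ, Sum.inr X ∉ fv φ →
    substS ψ X φ = φ := by
  intro φ
  induction φ with
  | evar n => intro _; rfl
  | svar N =>
      intro h
      have : N ≠ X := fun hNX => h (by simp [fv, hNX])
      simp [substS, this]
  | const c => intro _; rfl
  | app φ₁ φ₂ ih₁ ih₂ =>
      intro h; simp only [fv, Set.mem_union] at h; push_neg at h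
      simp [substS, ih₁ h.1, ih₂ h.2]
  | imp φ₁ φ₂ ih₁ ih₂ =>
      intro h; simp only [fv, Set.mem_union] at h; push_neg at h
      simp [substS, ih₁ h.1, ih₂ h.2]
  | ex z φ ih =>
      intro h
      have : Sum.inr X ∉ fv φ := fun hm => h ⟨hm, by simp⟩
      simp [substS, ih this]
  | mu Z φ ih =>
      intro h
      by_cases hZX : Z = X
      · simp [substS, hZX]
      · have : Sum.inr X ∉ fv φ := fun hm => h ⟨hm, by simp [Ne.symm hZX, hZX]⟩
        simp [substS, hZX, ih this]

lemma substE_fvless {x : ℕ} (δ : Pattern σ) : ∀ φ : Pattern σ, Sum.inl x ∉ fv φ →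
    substE δ x φ = φ := by
  intro φ
  induction φ with
  | evar n =>
      intro h
      have : n ≠ x := fun hnx => h (by simp [fv, hnx])
      simp [substE, this]
  | svar N => intro _; rfl
  | const c => intro _; rfl
  | app φ₁ φ₂ ih₁ ih₂ =>
      intro h; simp only [fv, Set.mem_union] at h; push_neg at h
      simp [substE, ih₁ h.1, ih₂ h.2]
  | imp φ₁ φ₂ ih₁ ih₂ =>
      intro h; simp only [fv, Set.mem_union] at h; push_neg at h
      simp [substE, ih₁ h.1, ih₂ h.2]
  | ex z φ ih =>
      intro h
      by_cases hzx : z = x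
      · simp [substE, hzx]
      · have : Sum.inl x ∉ fv φ := fun hm => h ⟨hm, by simp [Ne.symm hzx, hzx]⟩
        simp [substE, hzx, ih this]
  | mu Z φ ih =>
      intro h
      have : Sum.inl x ∉ fv φ := fun hm => h ⟨hm, by simp⟩
      simp [substE, ih this]

end Coincide
section Subst
open Classical
variable {σ A : Type} (S : AMLStructure σ A)

lemma eval_no_svar (φ : Pattern σ) {X : ℕ} (hX : Sum.inr X ∉ fv φ) (v : Val A) (D : Set A) :
    eval S φ (v.updS X D) = eval S φ v :=
  eval_coincide S φ _ _ (fun _ _ => rfl) (fun N hN => by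
    by_cases hNX : N = X
    · exact absurd (hNX ▸ hN) hX
    · simp [hNX])

lemma eval_no_evar (φ : Pattern σ) {x : ℕ} (hx : Sum.inl x ∉ fv φ) (v : Val A) (a : A) :
    eval S φ (v.updE x a) = eval S φ v :=
  eval_coincide S φ _ _ (fun n hn => by
    by_cases hnx : n = x
    · exact absurd (hnx ▸ hn) hx
    · simp [hnx]) (fun _ _ => rfl)

lemma eval_substS (ψ : Pattern σ) (X : ℕ) : ∀ φ : Pattern σ, ∀ v : Val A, freeForS ψ X φ →
    eval S (substS ψ X φ) v = eval S φ (v.updS X (eval S ψ v)) := by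
  intro φ
  induction φ with
  | evar n => intro v _; simp [substS, eval]
  | svar N =>
      intro v _
      by_cases hNX : N = X <;> simp [substS, eval, hNX]
  | const c => intro v _; rfl
  | app φ₁ φ₂ ih₁ ih₂ =>
      intro v hff
      simp only [substS, eval, ih₁ v hff.1, ih₂ v hff.2]
  | imp φ₁ φ₂ ih₁ ih₂ =>
      intro v hff
      simp only [substS, eval, ih₁ v hff.1, ih₂ v hff.2]
  | ex z φ ih =>
      intro v hff
      obtain ⟨hc, hrec⟩ := hff
      by_cases hX : Sum.inr X ∈ fv φ
      · have hz : Sum.inl z ∉ fv ψ := hc hX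
        simp only [substS, eval]
        refine Set.iUnion_congr fun a => ?_
        rw [ih (v.updE z a) hrec, eval_no_evar S ψ hz v a]
        rfl
      · have hXex : Sum.inr X ∉ fv (Pattern.ex z φ) := fun h => hX h.1
        simp only [substS, substS_fvless ψ φ hX]
        exact (eval_no_svar S (Pattern.ex z φ) hXex v _).symm
  | mu Z φ ih =>
      intro v hff
      by_cases hZX : Z = X
      · subst hZX
        simp only [substS, if_pos rfl, ↓reduceIte, eval]
        have : ∀ B : Set A, ((v.updS Z (eval S ψ v)).updS Z B) = v.updS Z B :=
          fun B => updS_updS_same v Z _ B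
        have h2 : {B : Set A | eval S φ ((v.updS Z (eval S ψ v)).updS Z B) ⊆ B}
            = {B : Set A | eval S φ (v.updS Z B) ⊆ B} :=
          Set.ext fun B => by simp only [Set.mem_setOf_eq]; rw [this B]
        rw [h2]
      · rcases hff with h | ⟨hc, hrec⟩
        · exact absurd h hZX
        by_cases hX : Sum.inr X ∈ fv φ
        · have hZψ : Sum.inr Z ∉ fv ψ := hc hX
          simp only [substS, if_neg hZX, eval]
          have key : ∀ B : Set A, eval S (substS ψ X φ) (v.updS Z B)
              = eval S φ ((v.updS X (eval S ψ v)).updS Z B) := by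
            intro B
            rw [ih (v.updS Z B) hrec, eval_no_svar S ψ hZψ v B,
                updS_updS_comm v (fun h => hZX h) B (eval S ψ v)]
          have h2 : {B : Set A | eval S (substS ψ X φ) (v.updS Z B) ⊆ B}
              = {B : Set A | eval S φ ((v.updS X (eval S ψ v)).updS Z B) ⊆ B} :=
            Set.ext fun B => by simp only [Set.mem_setOf_eq]; rw [key B]
          rw [h2]
        · have hXmu : Sum.inr X ∉ fv (Pattern.mu Z φ) := fun h => hX h.1
          simp only [substS, if_neg hZX, substS_fvless ψ φ hX]
          exact (eval_no_svar S (Pattern.mu Z φ) hXmu v _).symm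

lemma eval_substE_evar (y x : ℕ) : ∀ φ : Pattern σ, ∀ v : Val A,
    freeForE (Pattern.evar y : Pattern σ) x φ →
    eval S (substE (Pattern.evar y) x φ) v = eval S φ (v.updE x (v.e y)) := by
  intro φ
  induction φ with
  | evar n =>
      intro v _
      by_cases hnx : n = x <;> simp [substE, eval, hnx]
  | svar N => intro v _; simp [substE, eval]
  | const c => intro v _; rfl
  | app φ₁ φ₂ ih₁ ih₂ =>
      intro v hff
      simp only [substE, eval, ih₁ v hff.1, ih₂ v hff.2]
  | imp φ₁ φ₂ ih₁ ih₂ =>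
      intro v hff
      simp only [substE, eval, ih₁ v hff.1, ih₂ v hff.2]
  | ex z φ ih =>
      intro v hff
      by_cases hzx : z = x
      · subst hzx
        simp only [substE, if_pos rfl, eval]
        exact Set.iUnion_congr fun a => by rw [updE_updE_same]
      · rcases hff with h | ⟨hc, hrec⟩
        · exact absurd h hzx
        by_cases hX : Sum.inl x ∈ fv φ
        · have hzy : z ≠ y := by
            intro h; exact (hc hX) (by simp [fv, h])
          simp only [substE, if_neg hzx, eval]
          refine Set.iUnion_congr fun a => ?_
          rw [ih (v.updE z a) hrec]
          have h1 : (v.updE z a).e y = v.e y := by simp [Ne.symm hzy]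
          rw [h1, updE_updE_comm v (fun h => hzx h) a (v.e y)]
        · have hXex : Sum.inl x ∉ fv (Pattern.ex z φ) := fun h => hX h.1
          simp only [substE, if_neg hzx, substE_fvless (Pattern.evar y) φ hX]
          exact (eval_no_evar S (Pattern.ex z φ) hXex v _).symm
  | mu Z φ ih =>
      intro v hff
      simp only [substE, eval]
      refine congrArg _ (Set.ext fun B => ?_)
      simp only [Set.mem_setOf_eq]
      rw [ih (v.updS Z B) hff.2]
      rfl

end Subst
section Mono
open Classical
variable {σ A : Type} (S : AMLStructure σ A)

lemma eval_mono (X : ℕ) : ∀ φ : Pattern σ, ∀ (v : Val A) (B C : Set A), B ⊆ C →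
    (positiveIn X φ → eval S φ (v.updS X B) ⊆ eval S φ (v.updS X C)) ∧
    (negativeIn X φ → eval S φ (v.updS X C) ⊆ eval S φ (v.updS X B)) := by
  intro φ
  induction φ with
  | evar n => intro v B C _; exact ⟨fun _ => le_refl _, fun _ => le_refl _⟩
  | svar N =>
      intro v B C hBC
      constructor
      · intro _
        by_cases hNX : N = X <;> simp [eval, hNX]
        exact hBC
      · intro hneg
        have hNX : N ≠ X := hneg
        simp [eval, hNX]
  | const c => intro v B C _; exact ⟨fun _ => le_refl _, fun _ => le_refl _⟩
  | app φ₁ φ₂ ih₁ ih₂ =>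
      intro v B C hBC
      constructor
      · intro hpos
        have h := hpos
        simp only [positiveIn] at h
        exact sapp_mono S ((ih₁ v B C hBC).1 h.1) ((ih₂ v B C hBC).1 h.2)
      · intro hneg
        have h := hneg
        simp only [negativeIn] at h
        exact sapp_mono S ((ih₁ v B C hBC).2 h.1) ((ih₂ v B C hBC).2 h.2)
  | imp φ₁ φ₂ ih₁ ih₂ =>
      intro v B C hBC
      constructor
      · intro hpos
        have h := hpos
        simp only [positiveIn] at h
        have h1 := (ih₁ v B C hBC).2 h.1
        have h2 := (ih₂ v B C hBC).1 h.2
        simp only [eval]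
        intro a ha
        simp only [Set.mem_compl_iff, Set.mem_diff, not_and, not_not] at ha ⊢
        exact fun hmem => h2 (ha (h1 hmem))
      · intro hneg
        have h := hneg
        simp only [negativeIn] at h
        have h1 := (ih₁ v B C hBC).1 h.1
        have h2 := (ih₂ v B C hBC).2 h.2
        simp only [eval]
        intro a ha
        simp only [Set.mem_compl_iff, Set.mem_diff, not_and, not_not] at ha ⊢
        exact fun hmem => h2 (ha (h1 hmem))
  | ex z φ ih =>
      intro v B C hBC
      constructor
      · intro hpos
        have h : positiveIn X φ := hpos
        simp only [eval]
        refine Set.iUnion_mono fun a => ?_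
        have := (ih (v.updE z a) B C hBC).1 h
        simpa [← updE_updS] using this
      · intro hneg
        have h : negativeIn X φ := hneg
        simp only [eval]
        refine Set.iUnion_mono fun a => ?_
        have := (ih (v.updE z a) B C hBC).2 h
        simpa [← updE_updS] using this
  | mu Z φ ih =>
      intro v B C hBC
      by_cases hZX : Z = X
      · subst hZX
        have heq : eval S (Pattern.mu Z φ) (v.updS Z B) = eval S (Pattern.mu Z φ) (v.updS Z C) := by
          simp only [eval]
          have h2 : ∀ D : Set A, {B' : Set A | eval S φ ((v.updS Z D).updS Z B') ⊆ B'}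
              = {B' : Set A | eval S φ (v.updS Z B') ⊆ B'} := fun D =>
            Set.ext fun B' => by simp only [Set.mem_setOf_eq]; rw [updS_updS_same]
          rw [h2 B, h2 C]
        exact ⟨fun _ => heq ▸ le_refl _, fun _ => heq.symm ▸ le_refl _⟩
      · constructor
        · intro hpos
          have h : positiveIn X φ := by
            have := hpos
            simp only [positiveIn] at this
            rcases this with h | h
            · exact absurd h hZX
            · exact h
          simp only [eval]
          refine Set.sInter_subset_sInter fun B' hB' => ?_
          simp only [Set.mem_setOf_eq] at hB' ⊢
          refine subset_trans ?_ hB'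
          rw [← updS_updS_comm v hZX, ← updS_updS_comm v hZX]
          exact (ih ((v.updS Z B')) B C hBC).1 h
        · intro hneg
          have h : negativeIn X φ := by
            have := hneg
            simp only [negativeIn] at this
            rcases this with h | h
            · exact absurd h hZX
            · exact h
          simp only [eval]
          refine Set.sInter_subset_sInter fun B' hB' => ?_
          simp only [Set.mem_setOf_eq] at hB' ⊢
          refine subset_trans ?_ hB'
          rw [← updS_updS_comm v hZX, ← updS_updS_comm v hZX]
          exact (ih ((v.updS Z B')) B C hBC).2 h

end Mono
section Conn
open Classical
variable {σ A : Type} (S : AMLStructure σ A)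

@[simp] lemma eval_bot (v : Val A) : eval S (botP : Pattern σ) v = ∅ := by
  simp only [botP, eval]
  refine subset_antisymm (fun a ha => ?_) (Set.empty_subset _)
  exact ha ∅ (by simp [eval])

lemma eval_neg (φ : Pattern σ) (v : Val A) : eval S (negP φ) v = (eval S φ v)ᶜ := by
  have : eval S (negP φ) v = (eval S φ v \ eval S (botP : Pattern σ) v)ᶜ := rfl
  rw [this, eval_bot]
  ext a; simp

lemma imp_univ_iff (φ ψ : Pattern σ) (v : Val A) :
    eval S (Pattern.imp φ ψ) v = Set.univ ↔ eval S φ v ⊆ eval S ψ v := by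
  simp only [eval]
  rw [← Set.compl_empty_iff]
  simp only [compl_compl, Set.diff_eq_empty]

lemma eval_or (φ ψ : Pattern σ) (v : Val A) :
    eval S (orP φ ψ) v = eval S φ v ∪ eval S ψ v := by
  have h0 : eval S (orP φ ψ) v = (eval S (negP φ) v \ eval S ψ v)ᶜ := rfl
  rw [h0, eval_neg]
  ext a; by_cases h : a ∈ eval S φ v <;> simp [h]

lemma eval_and (φ ψ : Pattern σ) (v : Val A) :
    eval S (andP φ ψ) v = eval S φ v ∩ eval S ψ v := by
  have h0 : eval S (andP φ ψ) v = (eval S (orP (negP φ) (negP ψ)) v)ᶜ := eval_neg S _ v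
  rw [h0, eval_or, eval_neg, eval_neg]
  ext a; by_cases h : a ∈ eval S φ v <;> simp [h]

lemma ctx_empty (C : Ctx σ) (δ : Pattern σ) (v : Val A) (h : eval S δ v = ∅) :
    eval S (C.plug δ) v = ∅ := by
  induction C with
  | hole => exact h
  | appL C ψ ih => simp [Ctx.plug, eval, ih]
  | appR ψ C ih => simp [Ctx.plug, eval, ih]

end Conn
theorem soundness {σ : Type} (Γ : Set (Pattern σ)) (φ : Pattern σ) (h : Proof Γ φ) :
    ∀ (A : Type), Nonempty A → ∀ S : AMLStructure σ A,
      (∀ γ ∈ Γ, ∀ v : Val A, eval S γ v = Set.univ) →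
      ∀ v : Val A, eval S φ v = Set.univ := by
  induction h with
  | hyp hmem => intro A _ S hΓ v; exact hΓ _ hmem v
  | taut ht =>
      intro A hA S hΓ v
      exact ht A hA (fun ψ => eval S ψ v) ⟨eval_bot S v, fun _ _ => rfl⟩
  | @exQuant φ x y hff =>
      intro A _ S hΓ v
      rw [imp_univ_iff, eval_substE_evar S y x φ v hff]
      simp only [eval]
      exact Set.subset_iUnion (fun a => eval S φ (v.updE x a)) (v.e y)
  | @propBotL φ =>
      intro A _ S hΓ v
      rw [imp_univ_iff]
      have h0 : eval S (Pattern.app φ botP) v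
          = S.sapp (eval S φ v) (eval S (botP : Pattern σ) v) := rfl
      rw [h0, eval_bot, sapp_empty_right]
  | @propBotR φ =>
      intro A _ S hΓ v
      rw [imp_univ_iff]
      have h0 : eval S (Pattern.app botP φ) v
          = S.sapp (eval S (botP : Pattern σ) v) (eval S φ v) := rfl
      rw [h0, eval_bot, sapp_empty_left]
  | @propOrL φ ψ χ =>
      intro A _ S hΓ v
      rw [imp_univ_iff]
      have h1 : eval S (Pattern.app (orP φ ψ) χ) v
          = S.sapp (eval S (orP φ ψ) v) (eval S χ v) := rfl
      rw [h1, eval_or, sapp_union_left, eval_or]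
      exact le_refl _
  | @propOrR φ ψ χ =>
      intro A _ S hΓ v
      rw [imp_univ_iff]
      have h1 : eval S (Pattern.app χ (orP φ ψ)) v
          = S.sapp (eval S χ v) (eval S (orP φ ψ) v) := rfl
      rw [h1, eval_or, sapp_union_right, eval_or]
      exact le_refl _
  | @propExL φ ψ x hx =>
      intro A _ S hΓ v
      rw [imp_univ_iff]
      simp only [eval]
      rw [sapp_iUnion_left]
      refine Set.iUnion_mono fun a => ?_
      rw [eval_no_evar S ψ hx v a]
  | @propExR φ ψ x hx =>
      intro A _ S hΓ v
      rw [imp_univ_iff]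
      simp only [eval]
      rw [sapp_iUnion_right]
      refine Set.iUnion_mono fun a => ?_
      rw [eval_no_evar S ψ hx v a]
  | @preFixpoint φ X hpos hff =>
      intro A _ S hΓ v
      rw [imp_univ_iff, eval_substS S (Pattern.mu X φ) X φ v hff]
      intro a ha
      simp only [eval, Set.mem_sInter, Set.mem_setOf_eq]
      intro B hB
      refine hB ?_
      refine (eval_mono S X φ v _ B ?_).1 hpos ha
      intro b hb
      exact hb B hB
  | @existence x =>
      intro A hA S hΓ v
      simp only [eval]
      ext a
      simp only [Set.mem_iUnion, Set.mem_univ, iff_true]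
      exact ⟨a, by simp⟩
  | @singleton C₁ C₂ φ x =>
      intro A _ S hΓ v
      rw [eval_neg]
      have key : eval S (andP (C₁.plug (andP (Pattern.evar x) φ))
          (C₂.plug (andP (Pattern.evar x) (negP φ)))) v = ∅ := by
        rw [eval_and]
        by_cases hx : v.e x ∈ eval S φ v
        · have h2 : eval S (andP (Pattern.evar x) (negP φ)) v = ∅ := by
            rw [eval_and, eval_neg]
            have h3 : eval S (Pattern.evar x) v = {v.e x} := rfl
            rw [h3]
            ext a; simp only [Set.mem_inter_iff, Set.mem_singleton_iff, Set.mem_compl_iff,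
              Set.mem_empty_iff_false, iff_false, not_and]
            rintro rfl; simp [hx]
          rw [ctx_empty S C₂ _ v h2, Set.inter_empty]
        · have h2 : eval S (andP (Pattern.evar x) φ) v = ∅ := by
            rw [eval_and]
            have h3 : eval S (Pattern.evar x) v = {v.e x} := rfl
            rw [h3]
            ext a; simp only [Set.mem_inter_iff, Set.mem_singleton_iff,
              Set.mem_empty_iff_false, iff_false, not_and]
            rintro rfl; exact hx
          rw [ctx_empty S C₁ _ v h2, Set.empty_inter]
      rw [key, Set.compl_empty]
  | mp h1 h2 ih1 ih2 =>
      intro A hA S hΓ v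
      have h2 := (imp_univ_iff S _ _ v).mp (ih2 A hA S hΓ v)
      rw [ih1 A hA S hΓ v] at h2
      exact Set.eq_univ_of_univ_subset h2
  | @exRule φ ψ x hx h ih =>
      intro A hA S hΓ v
      rw [imp_univ_iff]
      simp only [eval]
      refine Set.iUnion_subset fun a => ?_
      have := (imp_univ_iff S φ ψ (v.updE x a)).mp (ih A hA S hΓ (v.updE x a))
      rw [eval_no_evar S ψ hx v a] at this
      exact this
  | framingL h ih =>
      intro A hA S hΓ v
      rw [imp_univ_iff]
      exact sapp_mono S ((imp_univ_iff S _ _ v).mp (ih A hA S hΓ v)) (le_refl _)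
  | framingR h ih =>
      intro A hA S hΓ v
      rw [imp_univ_iff]
      exact sapp_mono S (le_refl _) ((imp_univ_iff S _ _ v).mp (ih A hA S hΓ v))
  | @svSubst φ ψ X hff h ih =>
      intro A hA S hΓ v
      rw [eval_substS S ψ X φ v hff]
      exact ih A hA S hΓ _
  | @knasterTarski φ ψ X hff h ih =>
      intro A hA S hΓ v
      rw [imp_univ_iff]
      have hpre : eval S φ (v.updS X (eval S ψ v)) ⊆ eval S ψ v := by
        rw [← eval_substS S ψ X φ v hff]
        exact (imp_univ_iff S _ _ v).mp (ih A hA S hΓ v)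
      exact Set.sInter_subset_of_mem hpre
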